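/- Let μ be a probability measure on a measurable space Ω and let A, B, C be pairwise disjoint measurable sets with A ∪ B ∪ C = Ω and μ(A) > 0. Let T be a measurable set with μ(T) > 0 and μ[T | A] > 0, and let ε ≥ 0 be real. Assume μ(T ∩ B) ≥ exp(−2ε)·μ[T | A]·μ(B) and μ(T ∩ C) ≥ exp(−ε)·μ[T | A]·μ(C). Then μ[A | T] ≤ exp(2ε)·μ(A). -/
import Mathlib


open MeasureTheory

/-- Conditional probability `μ[A | B] = μ(A ∩ B) / μ(B)` as a real number. -/
noncomputable def condP {Ω : Type*} [MeasurableSpace Ω] (μ : Measure Ω) (A B : Set Ω) : ℝ :=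
  (μ (A ∩ B)).toReal / (μ B).toReal

theorem stmt_4 {Ω : Type*} [MeasurableSpace Ω] (μ : Measure Ω) [IsProbabilityMeasure μ]
    (A B C T : Set Ω)
    (hA : MeasurableSet A) (hB : MeasurableSet B) (hC : MeasurableSet C)
    (hT : MeasurableSet T)
    (hAB : Disjoint A B) (hAC : Disjoint A C) (hBC : Disjoint B C)
    (hUnion : A ∪ B ∪ C = Set.univ)
    (hA0 : 0 < (μ A).toReal) (hT0 : 0 < (μ T).toReal) (hTA : 0 < condP μ T A)
    (ε : ℝ) (hε : 0 ≤ ε)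
    (h1 : Real.exp (-(2*ε)) * condP μ T A * (μ B).toReal ≤ (μ (T ∩ B)).toReal)
    (h2 : Real.exp (-ε) * condP μ T A * (μ C).toReal ≤ (μ (T ∩ C)).toReal) :
    condP μ A T ≤ Real.exp (2*ε) * (μ A).toReal := by
  set p := condP μ T A with hp
  have ha : (μ (T ∩ A)).toReal = p * (μ A).toReal := by
    rw [hp]; unfold condP; field_simp
  -- total mass 1
  have hsum1 : (μ A).toReal + (μ B).toReal + (μ C).toReal = 1 := by
    have h1' : μ (A ∪ B ∪ C) = μ A + μ B + μ C := by
      rw [measure_union (hAC.union_left hBC) hC, measure_union hAB hB]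
    rw [hUnion, measure_univ] at h1'
    have := congrArg ENNReal.toReal h1'
    rw [ENNReal.toReal_add (by finiteness) (by finiteness),
        ENNReal.toReal_add (by finiteness) (by finiteness)] at this
    simpa using this.symm
  -- decompose T
  have hTdecomp : (μ T).toReal
      = (μ (T ∩ A)).toReal + (μ (T ∩ B)).toReal + (μ (T ∩ C)).toReal := by
    have hTeq : T = T ∩ A ∪ T ∩ B ∪ T ∩ C := by
      rw [← Set.inter_union_distrib_left, ← Set.inter_union_distrib_left, hUnion,
        Set.inter_univ]
    have h1' : μ T = μ (T ∩ A) + μ (T ∩ B) + μ (T ∩ C) := by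
      conv_lhs => rw [hTeq]
      rw [measure_union ((hAC.union_left hBC).mono
          (Set.union_subset_union Set.inter_subset_right Set.inter_subset_right)
          Set.inter_subset_right) (hT.inter hC),
        measure_union (hAB.mono Set.inter_subset_right Set.inter_subset_right)
          (hT.inter hB)]
    have := congrArg ENNReal.toReal h1'
    rwa [ENNReal.toReal_add (by finiteness) (by finiteness),
        ENNReal.toReal_add (by finiteness) (by finiteness)] at this
  have hexp2 : (0:ℝ) < Real.exp (-(2*ε)) := Real.exp_pos _
  have hexp1 : Real.exp (-(2*ε)) ≤ Real.exp (-ε) := by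
    apply Real.exp_le_exp.2; linarith
  have hexp3 : Real.exp (-(2*ε)) ≤ 1 := Real.exp_le_one_iff.2 (by linarith)
  have hB0 : (0:ℝ) ≤ (μ B).toReal := ENNReal.toReal_nonneg
  have hC0 : (0:ℝ) ≤ (μ C).toReal := ENNReal.toReal_nonneg
  -- key lower bound on μ T
  have hkey : Real.exp (-(2*ε)) * p ≤ (μ T).toReal := by
    have hbcb : Real.exp (-(2*ε)) * p * (μ C).toReal ≤ (μ (T ∩ C)).toReal := by
      refine le_trans ?_ h2
      have := mul_le_mul_of_nonneg_right (mul_le_mul_of_nonneg_right hexp1 hTA.le) hC0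
      linarith
    have htap : Real.exp (-(2*ε)) * p * (μ A).toReal ≤ (μ (T ∩ A)).toReal := by
      rw [ha]
      have : Real.exp (-(2*ε)) * p ≤ 1 * p :=
        mul_le_mul_of_nonneg_right hexp3 hTA.le
      nlinarith
    have : Real.exp (-(2*ε)) * p * ((μ A).toReal + (μ B).toReal + (μ C).toReal)
        ≤ (μ T).toReal := by
      rw [hTdecomp]
      nlinarith
    rw [hsum1, mul_one] at this
    exact this
  -- conclude
  unfold condP
  rw [Set.inter_comm, div_le_iff₀ hT0]
  calc (μ (T ∩ A)).toReal = p * (μ A).toReal := ha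
    _ ≤ Real.exp (2*ε) * (μ A).toReal * (Real.exp (-(2*ε)) * p) := by
        rw [show Real.exp (2*ε) * (μ A).toReal * (Real.exp (-(2*ε)) * p)
            = (Real.exp (2*ε) * Real.exp (-(2*ε))) * (p * (μ A).toReal) by ring,
          ← Real.exp_add]
        simp
    _ ≤ Real.exp (2*ε) * (μ A).toReal * (μ T).toReal := by
        apply mul_le_mul_of_nonneg_left hkey
        positivity
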